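/- arXiv:1010.1784 — 2 statements merged into one kernel-verified Lean document; each statement's English description precedes it below -/
import Mathlib

section
/- For integers n ≥ 3 and m ≥ 2, the metric dimension of the graph (Pₙ × Pₘ) ⊙ K₁ equals 3. -/
open SimpleGraph

/-- Corona `G ⊙ K₁`: attach to each vertex `v` (as `Sum.inl v`) a pendant vertex `Sum.inr v`. -/
def corona {V : Type*} (G : SimpleGraph V) : SimpleGraph (V ⊕ V) :=
  SimpleGraph.fromRel (fun a b =>
    match a, b with
    | Sum.inl x, Sum.inl y => G.Adj x y
    | Sum.inl x, Sum.inr y => x = y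
    | _, _ => False)

/-- `S` is a resolving set for `G`: distinct vertices have distinct distance vectors to `S`. -/
def IsResolving {V : Type*} (G : SimpleGraph V) (S : Set V) : Prop :=
  ∀ u v : V, (∀ s ∈ S, G.dist u s = G.dist v s) → u = v

/-- Metric dimension: minimum cardinality of a resolving set. -/
noncomputable def metricDim {V : Type*} [Fintype V] (G : SimpleGraph V) : ℕ :=
  sInf {k | ∃ S : Finset V, S.card = k ∧ IsResolving G (↑S : Set V)}

lemma pathGraph_connected' {n : ℕ} (h : 1 ≤ n) : (pathGraph n).Connected := by
  obtain ⟨k, rfl⟩ : ∃ k, n = k + 1 := ⟨n - 1, by omega⟩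
  exact pathGraph_connected k

lemma pathGraph_walk_bound {n : ℕ} {u v : Fin n} (w : (pathGraph n).Walk u v) :
    v.val ≤ u.val + w.length ∧ u.val ≤ v.val + w.length := by
  induction w with
  | nil => simp
  | @cons x y z h p ih =>
    rw [pathGraph_adj] at h
    simp only [Walk.length_cons]
    omega

lemma pathGraph_dist_le_aux {n : ℕ} (k : ℕ) : ∀ (u v : Fin n), u.val + k = v.val →
    (pathGraph n).dist u v ≤ k := by
  induction k with
  | zero => intro u v h; have : u = v := Fin.ext (by omega); simp [this]
  | succ k ih =>
    intro u v h
    have hlt : u.val + 1 < n := by omega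
    set u' : Fin n := ⟨u.val + 1, hlt⟩ with hu'
    have hadj : (pathGraph n).Adj u u' := by rw [pathGraph_adj]; left; rfl
    have h1 : (pathGraph n).dist u u' = 1 := dist_eq_one_iff_adj.mpr hadj
    have h2 : (pathGraph n).dist u' v ≤ k := ih u' v (by simp [hu']; omega)
    have t := (pathGraph_connected' (by omega : 1 ≤ n)).dist_triangle (u := u) (v := u') (w := v)
    omega

lemma pathGraph_dist {n : ℕ} (u v : Fin n) :
    (pathGraph n).dist u v = (u.val - v.val) + (v.val - u.val) := by
  have hn : 1 ≤ n := by have := u.isLt; omega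
  apply le_antisymm
  · rcases le_total u.val v.val with h | h
    · have := pathGraph_dist_le_aux (v.val - u.val) u v (by omega)
      omega
    · have := pathGraph_dist_le_aux (u.val - v.val) v u (by omega)
      rw [SimpleGraph.dist_comm]
      omega
  · obtain ⟨w, hw⟩ := ((pathGraph_connected' hn).preconnected u v).exists_walk_length_eq_dist
    have := pathGraph_walk_bound w
    omega

lemma boxProd_walk_bound {α β : Type*} {G : SimpleGraph α} {H : SimpleGraph β}
    (hG : G.Connected) (hH : H.Connected) {a b : α × β} (w : (G □ H).Walk a b) :
    G.dist a.1 b.1 + H.dist a.2 b.2 ≤ w.length := by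
  induction w with
  | nil => simp
  | @cons x y z h p ih =>
    rw [boxProd_adj] at h
    simp only [Walk.length_cons]
    rcases h with ⟨h1, h2⟩ | ⟨h1, h2⟩
    · have t := hG.dist_triangle (u := x.1) (v := y.1) (w := z.1)
      have e1 : G.dist x.1 y.1 = 1 := dist_eq_one_iff_adj.mpr h1
      rw [h2] at *
      omega
    · have t := hH.dist_triangle (u := x.2) (v := y.2) (w := z.2)
      have e1 : H.dist x.2 y.2 = 1 := dist_eq_one_iff_adj.mpr h1
      rw [h2] at *
      omega

lemma boxProd_dist {α β : Type*} {G : SimpleGraph α} {H : SimpleGraph β}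
    (hG : G.Connected) (hH : H.Connected) (a b : α × β) :
    (G □ H).dist a b = G.dist a.1 b.1 + H.dist a.2 b.2 := by
  apply le_antisymm
  · obtain ⟨w1, hw1⟩ := hG.exists_walk_length_eq_dist a.1 b.1
    obtain ⟨w2, hw2⟩ := hH.exists_walk_length_eq_dist a.2 b.2
    have hle := SimpleGraph.dist_le ((w1.boxProdLeft H a.2).append (w2.boxProdRight G b.1))
    rw [Walk.length_append] at hle
    have e1 : (w1.boxProdLeft H a.2).length = w1.length := Walk.length_map _ _
    have e2 : (w2.boxProdRight G b.1).length = w2.length := Walk.length_map _ _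
    rw [e1, e2] at hle
    simp only [Prod.mk.eta] at hle
    omega
  · obtain ⟨w, hw⟩ := ((hG.boxProd hH).preconnected a b).exists_walk_length_eq_dist
    have := boxProd_walk_bound hG hH w
    omega

section generic
lemma dist_map_le_length {V V' : Type*} {G : SimpleGraph V} {G' : SimpleGraph V'} (hc : G'.Connected)
    (φ : V → V') (hφ : ∀ a b, G.Adj a b → G'.Adj (φ a) (φ b) ∨ φ a = φ b)
    {u v : V} (w : G.Walk u v) : G'.dist (φ u) (φ v) ≤ w.length := by
  induction w with
  | nil => simp
  | @cons x y z h p ih =>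
    rcases hφ _ _ h with h1 | h1
    · have t := hc.dist_triangle (u := φ x) (v := φ y) (w := φ z)
      have h2 : G'.dist (φ x) (φ y) = 1 := dist_eq_one_iff_adj.mpr h1
      simp only [Walk.length_cons]
      omega
    · simpa [h1, Walk.length_cons] using Nat.le_succ_of_le ih

lemma dist_map_le_dist {V V' : Type*} {G : SimpleGraph V} {G' : SimpleGraph V'} (hc : G'.Connected)
    (φ : V → V') (hφ : ∀ a b, G.Adj a b → G'.Adj (φ a) (φ b) ∨ φ a = φ b)
    {u v : V} (hr : G.Reachable u v) : G'.dist (φ u) (φ v) ≤ G.dist u v := by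
  obtain ⟨w, hw⟩ := hr.exists_walk_length_eq_dist
  simpa [hw] using dist_map_le_length hc φ hφ w
end generic


variable {V : Type*} {G : SimpleGraph V}

@[simp] lemma corona_adj_inl_inl {x y : V} :
    (corona G).Adj (Sum.inl x) (Sum.inl y) ↔ G.Adj x y := by
  simp only [corona, fromRel_adj, ne_eq, Sum.inl.injEq]
  constructor
  · rintro ⟨h1, h2 | h2⟩
    · exact h2
    · exact h2.symm
  · intro h
    exact ⟨G.ne_of_adj h, Or.inl h⟩

@[simp] lemma corona_adj_inl_inr {x y : V} :
    (corona G).Adj (Sum.inl x) (Sum.inr y) ↔ x = y := by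
  simp only [corona, fromRel_adj, ne_eq]
  constructor
  · rintro ⟨h1, h2 | h2⟩
    · exact h2
    · exact h2.elim
  · rintro rfl
    exact ⟨by simp, Or.inl rfl⟩

@[simp] lemma corona_adj_inr_inl {x y : V} :
    (corona G).Adj (Sum.inr x) (Sum.inl y) ↔ y = x := by
  rw [adj_comm, corona_adj_inl_inr]

@[simp] lemma corona_adj_inr_inr {x y : V} :
    ¬ (corona G).Adj (Sum.inr x) (Sum.inr y) := by
  simp only [corona, fromRel_adj, ne_eq]
  rintro ⟨h1, h2 | h2⟩ <;> exact h2

def inlHom (G : SimpleGraph V) : G →g corona G :=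
  ⟨Sum.inl, fun h => corona_adj_inl_inl.mpr h⟩

lemma corona_connected (hG : G.Connected) : (corona G).Connected := by
  have hne : Nonempty V := hG.nonempty
  refine ⟨fun a b => ?_⟩
  have key : ∀ a : V ⊕ V, (corona G).Reachable a (Sum.inl (Sum.elim id id a)) := by
    rintro (x | x)
    · exact Reachable.refl _
    · exact (Adj.reachable (by simp)).symm
  refine (key a).trans (Reachable.trans ?_ (key b).symm)
  exact Reachable.map (inlHom G) (hG.preconnected _ _)

lemma corona_proj_adj : ∀ a b : V ⊕ V, (corona G).Adj a b →
    G.Adj (Sum.elim id id a) (Sum.elim id id b) ∨ Sum.elim id id a = Sum.elim id id b := by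
  rintro (x | x) (y | y) h <;> simp_all

lemma corona_dist_inl_inl (hG : G.Connected) (u v : V) :
    (corona G).dist (Sum.inl u) (Sum.inl v) = G.dist u v := by
  apply le_antisymm
  · obtain ⟨w, hw⟩ := hG.exists_walk_length_eq_dist u v
    have := SimpleGraph.dist_le (w.map (inlHom G))
    simpa [hw, inlHom] using this
  · have := dist_map_le_dist hG (Sum.elim id id) corona_proj_adj
      ((corona_connected hG).preconnected (Sum.inl u) (Sum.inl v))
    simpa using this

lemma corona_dist_inr (hG : G.Connected) (a : V ⊕ V) (p : V) (h : a ≠ Sum.inr p) :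
    (corona G).dist a (Sum.inr p) = (corona G).dist a (Sum.inl p) + 1 := by
  apply le_antisymm
  · obtain ⟨w, hw⟩ := ((corona_connected hG).preconnected a (Sum.inl p)).exists_walk_length_eq_dist
    have hadj : (corona G).Adj (Sum.inl p) (Sum.inr p) := by simp
    have := SimpleGraph.dist_le (w.concat hadj)
    rwa [Walk.length_concat, hw] at this
  · obtain ⟨w, hw⟩ := ((corona_connected hG).preconnected (Sum.inr p) a).exists_walk_length_eq_dist
    rw [SimpleGraph.dist_comm] at hw
    cases w with
    | nil => exact absurd rfl h.symm
    | cons h' q =>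
      rename_i x
      have hx : x = Sum.inl p := by
        cases x with
        | inl y => simp at h'; rw [h']
        | inr y => exact absurd h' (by simp)
      subst hx
      have h2 : (corona G).dist a (Sum.inl p) ≤ q.length := by
        rw [SimpleGraph.dist_comm]
        exact SimpleGraph.dist_le q
      rw [Walk.length_cons] at hw
      omega

lemma corona_dist_inl_inr (hG : G.Connected) (u p : V) :
    (corona G).dist (Sum.inl u) (Sum.inr p) = G.dist u p + 1 := by
  rw [corona_dist_inr hG _ _ (by simp), corona_dist_inl_inl hG]

lemma corona_dist_inr_inl (hG : G.Connected) (u p : V) :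
    (corona G).dist (Sum.inr u) (Sum.inl p) = G.dist u p + 1 := by
  rw [SimpleGraph.dist_comm, corona_dist_inl_inr hG, SimpleGraph.dist_comm]

lemma corona_dist_inr_inr (hG : G.Connected) (u p : V) (h : u ≠ p) :
    (corona G).dist (Sum.inr u) (Sum.inr p) = G.dist u p + 2 := by
  rw [corona_dist_inr hG _ _ (by simp [h]), corona_dist_inr_inl hG]

def nd (a b : ℕ × ℕ) : ℕ := (a.1 - b.1) + (b.1 - a.1) + ((a.2 - b.2) + (b.2 - a.2))

set_option maxHeartbeats 1000000 in
lemma key {n m : ℕ} (hn : 3 ≤ n) (hm : 2 ≤ m) (p q : ℕ × ℕ)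
    (hp1 : p.1 < n) (hp2 : p.2 < m) (hq1 : q.1 < n) (hq2 : q.2 < m) :
    (∃ u v : ℕ × ℕ, (u.1 < n ∧ u.2 < m) ∧ (v.1 < n ∧ v.2 < m) ∧ u ≠ v ∧
      nd u p = nd v p ∧ nd u q = nd v q) ∨
    (∃ u v : ℕ × ℕ, (u.1 < n ∧ u.2 < m) ∧ (v.1 < n ∧ v.2 < m) ∧ v ≠ p ∧ v ≠ q ∧
      nd u p = nd v p + 1 ∧ nd u q = nd v q + 1) := by
  obtain ⟨p1, p2⟩ := p
  obtain ⟨q1, q2⟩ := q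
  simp only at hp1 hp2 hq1 hq2
  by_cases hM1 : p1 + 1 < n ∧ q1 + 1 < n
  · by_cases hpq1 : p1 = q1
    · by_cases hpq2 : p2 = q2
      · -- p = q : x-upshift with v2 ≠ p2
        by_cases h0 : p2 = 0
        · refine Or.inr ⟨(p1+1, 1), (p1, 1), ?_, ?_, ?_, ?_, ?_, ?_⟩ <;>
            (try simp [nd, Prod.ext_iff]) <;> omega
        · refine Or.inr ⟨(p1+1, 0), (p1, 0), ?_, ?_, ?_, ?_, ?_, ?_⟩ <;>
            (try simp [nd, Prod.ext_iff]) <;> omega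
      · by_cases hX : 1 ≤ p1
        · -- reflection in x around p1 = q1
          refine Or.inl ⟨(p1+1, 0), (p1-1, 0), ?_, ?_, ?_, ?_, ?_⟩ <;>
            (try simp [nd, Prod.ext_iff]) <;> omega
        · -- p1 = q1 = 0 : shift with v = (1,0)
          refine Or.inr ⟨(2, 0), (1, 0), ?_, ?_, ?_, ?_, ?_, ?_⟩ <;>
            (try simp [nd, Prod.ext_iff]) <;> omega
    · rcases Nat.lt_or_ge p1 q1 with hlt | hge
      · by_cases h0 : q2 = 0
        · refine Or.inr ⟨(q1+1, 1), (q1, 1), ?_, ?_, ?_, ?_, ?_, ?_⟩ <;>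
            (try simp [nd, Prod.ext_iff]) <;> omega
        · refine Or.inr ⟨(q1+1, 0), (q1, 0), ?_, ?_, ?_, ?_, ?_, ?_⟩ <;>
            (try simp [nd, Prod.ext_iff]) <;> omega
      · by_cases h0 : p2 = 0
        · refine Or.inr ⟨(p1+1, 1), (p1, 1), ?_, ?_, ?_, ?_, ?_, ?_⟩ <;>
            (try simp [nd, Prod.ext_iff]) <;> omega
        · refine Or.inr ⟨(p1+1, 0), (p1, 0), ?_, ?_, ?_, ?_, ?_, ?_⟩ <;>
            (try simp [nd, Prod.ext_iff]) <;> omega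
  · by_cases hm1 : 1 ≤ p1 ∧ 1 ≤ q1
    · by_cases hpq1 : p1 = q1
      · by_cases hpq2 : p2 = q2
        · by_cases h0 : p2 = 0
          · refine Or.inr ⟨(p1-1, 1), (p1, 1), ?_, ?_, ?_, ?_, ?_, ?_⟩ <;>
              (try simp [nd, Prod.ext_iff]) <;> omega
          · refine Or.inr ⟨(p1-1, 0), (p1, 0), ?_, ?_, ?_, ?_, ?_, ?_⟩ <;>
              (try simp [nd, Prod.ext_iff]) <;> omega
        · -- p1 = q1 = n-1, p2 ≠ q2
          refine Or.inr ⟨(n-3, 0), (n-2, 0), ?_, ?_, ?_, ?_, ?_, ?_⟩ <;>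
            (try simp [nd, Prod.ext_iff]) <;> omega
      · rcases Nat.lt_or_ge p1 q1 with hlt | hge
        · by_cases h0 : p2 = 0
          · refine Or.inr ⟨(p1-1, 1), (p1, 1), ?_, ?_, ?_, ?_, ?_, ?_⟩ <;>
              (try simp [nd, Prod.ext_iff]) <;> omega
          · refine Or.inr ⟨(p1-1, 0), (p1, 0), ?_, ?_, ?_, ?_, ?_, ?_⟩ <;>
              (try simp [nd, Prod.ext_iff]) <;> omega
        · by_cases h0 : q2 = 0
          · refine Or.inr ⟨(q1-1, 1), (q1, 1), ?_, ?_, ?_, ?_, ?_, ?_⟩ <;>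
              (try simp [nd, Prod.ext_iff]) <;> omega
          · refine Or.inr ⟨(q1-1, 0), (q1, 0), ?_, ?_, ?_, ?_, ?_, ?_⟩ <;>
              (try simp [nd, Prod.ext_iff]) <;> omega
    · -- one x-coordinate is 0, the other n-1
      by_cases hv1a : p1 ≠ 0 ∧ q1 ≠ 0
      · -- v1 = 0 works
        by_cases hM2 : p2 + 1 < m ∧ q2 + 1 < m
        · refine Or.inr ⟨(0, max p2 q2 + 1), (0, max p2 q2), ?_, ?_, ?_, ?_, ?_, ?_⟩ <;>
            (try simp [nd, Prod.ext_iff]) <;> omega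
        · by_cases hm2 : 1 ≤ p2 ∧ 1 ≤ q2
          · refine Or.inr ⟨(0, min p2 q2 - 1), (0, min p2 q2), ?_, ?_, ?_, ?_, ?_, ?_⟩ <;>
              (try simp [nd, Prod.ext_iff]) <;> omega
          · exact absurd rfl (by omega : ¬ (0:ℕ) = 0) -- impossible: min p1 q1 = 0 contradicts hv1a
      · by_cases hv1b : p1 ≠ 1 ∧ q1 ≠ 1
        · by_cases hM2 : p2 + 1 < m ∧ q2 + 1 < m
          · refine Or.inr ⟨(1, max p2 q2 + 1), (1, max p2 q2), ?_, ?_, ?_, ?_, ?_, ?_⟩ <;>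
              (try simp [nd, Prod.ext_iff]) <;> omega
          · by_cases hm2 : 1 ≤ p2 ∧ 1 ≤ q2
            · refine Or.inr ⟨(1, min p2 q2 - 1), (1, min p2 q2), ?_, ?_, ?_, ?_, ?_, ?_⟩ <;>
                (try simp [nd, Prod.ext_iff]) <;> omega
            · -- corners case
              by_cases hd : (p1 = 0 ∧ p2 = 0) ∨ (q1 = 0 ∧ q2 = 0)
              · refine Or.inl ⟨(1, 0), (0, 1), ?_, ?_, ?_, ?_, ?_⟩ <;>
                  (try simp [nd, Prod.ext_iff]) <;> omega
              · refine Or.inl ⟨(0, m-2), (1, m-1), ?_, ?_, ?_, ?_, ?_⟩ <;>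
                  (try simp [nd, Prod.ext_iff]) <;> omega
        · by_cases hM2 : p2 + 1 < m ∧ q2 + 1 < m
          · refine Or.inr ⟨(2, max p2 q2 + 1), (2, max p2 q2), ?_, ?_, ?_, ?_, ?_, ?_⟩ <;>
              (try simp [nd, Prod.ext_iff]) <;> omega
          · by_cases hm2 : 1 ≤ p2 ∧ 1 ≤ q2
            · refine Or.inr ⟨(2, min p2 q2 - 1), (2, min p2 q2), ?_, ?_, ?_, ?_, ?_, ?_⟩ <;>
                (try simp [nd, Prod.ext_iff]) <;> omega
            · -- corners case, v1 ∈ {0,1} both bad: impossible since bad set ⊆ {p1,q1}={0,n-1}, n≥3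
              exact absurd rfl (by omega : ¬ (0:ℕ) = 0)
def toP {n m : ℕ} (a : Fin n × Fin m) : ℕ × ℕ := (a.1.val, a.2.val)

lemma toP_inj {n m : ℕ} {a b : Fin n × Fin m} (h : toP a = toP b) : a = b := by
  simp only [toP, Prod.ext_iff] at h
  exact Prod.ext (Fin.ext h.1) (Fin.ext h.2)

lemma grid_dist {n m : ℕ} (hn : 1 ≤ n) (hm : 1 ≤ m) (a b : Fin n × Fin m) :
    (pathGraph n □ pathGraph m).dist a b = nd (toP a) (toP b) := by
  rw [boxProd_dist (pathGraph_connected' hn) (pathGraph_connected' hm),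
    pathGraph_dist, pathGraph_dist]
  simp only [nd, toP]

variable {n m : ℕ}

lemma grid_connected (hn1 : 1 ≤ n) (hm1 : 1 ≤ m) : (pathGraph n □ pathGraph m).Connected :=
  (pathGraph_connected' hn1).boxProd (pathGraph_connected' hm1)

lemma GD1 (hn1 : 1 ≤ n) (hm1 : 1 ≤ m) (x y : Fin n × Fin m) :
    (corona (pathGraph n □ pathGraph m)).dist (Sum.inl x) (Sum.inl y) = nd (toP x) (toP y) := by
  rw [corona_dist_inl_inl (grid_connected hn1 hm1), grid_dist hn1 hm1]

lemma GD2 (hn1 : 1 ≤ n) (hm1 : 1 ≤ m) (x y : Fin n × Fin m) :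
    (corona (pathGraph n □ pathGraph m)).dist (Sum.inl x) (Sum.inr y) = nd (toP x) (toP y) + 1 := by
  rw [corona_dist_inl_inr (grid_connected hn1 hm1), grid_dist hn1 hm1]

lemma GD3 (hn1 : 1 ≤ n) (hm1 : 1 ≤ m) (x y : Fin n × Fin m) :
    (corona (pathGraph n □ pathGraph m)).dist (Sum.inr x) (Sum.inl y) = nd (toP x) (toP y) + 1 := by
  rw [corona_dist_inr_inl (grid_connected hn1 hm1), grid_dist hn1 hm1]

lemma GD4 (hn1 : 1 ≤ n) (hm1 : 1 ≤ m) {x y : Fin n × Fin m} (h : x ≠ y) :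
    (corona (pathGraph n □ pathGraph m)).dist (Sum.inr x) (Sum.inr y) = nd (toP x) (toP y) + 2 := by
  rw [corona_dist_inr_inr (grid_connected hn1 hm1) _ _ h, grid_dist hn1 hm1]

lemma GD5 (hn1 : 1 ≤ n) (hm1 : 1 ≤ m) {x y : Fin n × Fin m} :
    (corona (pathGraph n □ pathGraph m)).dist (Sum.inr x) (Sum.inr y) = 0 ↔ x = y := by
  rw [(corona_connected (grid_connected hn1 hm1)).dist_eq_zero_iff]
  simp

-- pure arithmetic lemmas
lemma ndA (hn : 3 ≤ n) (hm : 2 ≤ m) {x y : ℕ × ℕ}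
    (hx1 : x.1 < n) (hx2 : x.2 < m) (hy1 : y.1 < n) (hy2 : y.2 < m)
    (h1 : nd x (0,0) = nd y (0,0)) (h2 : nd x (n-1,0) = nd y (n-1,0))
    (h3 : nd x (0,m-1) = nd y (0,m-1)) : x = y := by
  obtain ⟨x1, x2⟩ := x; obtain ⟨y1, y2⟩ := y
  simp only [nd] at h1 h2 h3 hx1 hx2 hy1 hy2
  simp only [Prod.mk.injEq]
  omega

lemma ndB (hn : 3 ≤ n) (hm : 2 ≤ m) {x y : ℕ × ℕ}
    (hx1 : x.1 < n) (hx2 : x.2 < m) (hy1 : y.1 < n) (hy2 : y.2 < m)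
    (h1 : nd x (0,0) + 1 = nd y (0,0) + 2) (h2 : nd x (n-1,0) + 1 = nd y (n-1,0) + 2)
    (h3 : nd x (0,m-1) + 1 = nd y (0,m-1) + 2) : False := by
  obtain ⟨x1, x2⟩ := x; obtain ⟨y1, y2⟩ := y
  simp only [nd] at h1 h2 h3 hx1 hx2 hy1 hy2
  omega

lemma toP_bounds (x : Fin n × Fin m) : (toP x).1 < n ∧ (toP x).2 < m :=
  ⟨x.1.isLt, x.2.isLt⟩


variable {n m : ℕ}

lemma cornerA (hn : 3 ≤ n) (hm : 2 ≤ m) : toP ((⟨0, by omega⟩, ⟨0, by omega⟩) : Fin n × Fin m) = (0,0) := rfl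
lemma cornerB (hn : 3 ≤ n) (hm : 2 ≤ m) : toP ((⟨n-1, by omega⟩, ⟨0, by omega⟩) : Fin n × Fin m) = (n-1,0) := rfl
lemma cornerC (hn : 3 ≤ n) (hm : 2 ≤ m) : toP ((⟨0, by omega⟩, ⟨m-1, by omega⟩) : Fin n × Fin m) = (0,m-1) := rfl

set_option maxHeartbeats 1000000 in
lemma upper_bound (hn : 3 ≤ n) (hm : 2 ≤ m) :
    ∃ S : Finset ((Fin n × Fin m) ⊕ (Fin n × Fin m)), S.card = 3 ∧
      IsResolving (corona (pathGraph n □ pathGraph m)) (↑S : Set _) := by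
  have hn1 : 1 ≤ n := by omega
  have hm1 : 1 ≤ m := by omega
  let A : Fin n × Fin m := (⟨0, by omega⟩, ⟨0, by omega⟩)
  let B : Fin n × Fin m := (⟨n-1, by omega⟩, ⟨0, by omega⟩)
  let C : Fin n × Fin m := (⟨0, by omega⟩, ⟨m-1, by omega⟩)
  have hTA : toP A = (0,0) := rfl
  have hTB : toP B = (n-1,0) := rfl
  have hTC : toP C = (0,m-1) := rfl
  have hAB : A ≠ B := fun h => by
    have := congrArg (fun z => (toP z).1) h
    simp only [hTA, hTB] at this
    exact absurd this (by omega)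
  have hAC : A ≠ C := fun h => by
    have := congrArg (fun z => (toP z).2) h
    simp only [hTA, hTC] at this
    exact absurd this (by omega)
  have hBC : B ≠ C := fun h => by
    have := congrArg (fun z => (toP z).1) h
    simp only [hTB, hTC] at this
    exact absurd this (by omega)
  refine ⟨{Sum.inr A, Sum.inr B, Sum.inr C}, ?_, ?_⟩
  · exact Finset.card_eq_three.mpr ⟨_, _, _, by simp [hAB], by simp [hAC], by simp [hBC], rfl⟩
  rintro (x | x) (y | y) hd
  · -- inl inl
    have h1 := hd (Sum.inr A) (by simp)
    have h2 := hd (Sum.inr B) (by simp)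
    have h3 := hd (Sum.inr C) (by simp)
    rw [GD2 hn1 hm1, GD2 hn1 hm1, hTA] at h1
    rw [GD2 hn1 hm1, GD2 hn1 hm1, hTB] at h2
    rw [GD2 hn1 hm1, GD2 hn1 hm1, hTC] at h3
    have := ndA hn hm (toP_bounds x).1 (toP_bounds x).2 (toP_bounds y).1 (toP_bounds y).2
      (by omega) (by omega) (by omega)
    rw [toP_inj this]
  · -- inl inr : impossible
    exfalso
    have h1 := hd (Sum.inr A) (by simp)
    have h2 := hd (Sum.inr B) (by simp)
    have h3 := hd (Sum.inr C) (by simp)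
    rw [GD2 hn1 hm1, hTA] at h1
    rw [GD2 hn1 hm1, hTB] at h2
    rw [GD2 hn1 hm1, hTC] at h3
    by_cases hyA : y = A
    · rw [hyA, SimpleGraph.dist_self] at h1; omega
    by_cases hyB : y = B
    · rw [hyB, SimpleGraph.dist_self] at h2; omega
    by_cases hyC : y = C
    · rw [hyC, SimpleGraph.dist_self] at h3; omega
    rw [GD4 hn1 hm1 hyA, hTA] at h1
    rw [GD4 hn1 hm1 hyB, hTB] at h2
    rw [GD4 hn1 hm1 hyC, hTC] at h3
    exact ndB hn hm (toP_bounds x).1 (toP_bounds x).2 (toP_bounds y).1 (toP_bounds y).2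
      (by omega) (by omega) (by omega)
  · -- inr inl : impossible
    exfalso
    have h1 := hd (Sum.inr A) (by simp)
    have h2 := hd (Sum.inr B) (by simp)
    have h3 := hd (Sum.inr C) (by simp)
    rw [GD2 hn1 hm1, hTA] at h1
    rw [GD2 hn1 hm1, hTB] at h2
    rw [GD2 hn1 hm1, hTC] at h3
    by_cases hxA : x = A
    · rw [hxA, SimpleGraph.dist_self] at h1; omega
    by_cases hxB : x = B
    · rw [hxB, SimpleGraph.dist_self] at h2; omega
    by_cases hxC : x = C
    · rw [hxC, SimpleGraph.dist_self] at h3; omega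
    rw [GD4 hn1 hm1 hxA, hTA] at h1
    rw [GD4 hn1 hm1 hxB, hTB] at h2
    rw [GD4 hn1 hm1 hxC, hTC] at h3
    exact ndB hn hm (toP_bounds y).1 (toP_bounds y).2 (toP_bounds x).1 (toP_bounds x).2
      (by omega) (by omega) (by omega)
  · -- inr inr
    have h1 := hd (Sum.inr A) (by simp)
    have h2 := hd (Sum.inr B) (by simp)
    have h3 := hd (Sum.inr C) (by simp)
    by_cases hxA : x = A
    · rw [hxA, SimpleGraph.dist_self] at h1
      rw [hxA, (GD5 hn1 hm1 (x := y) (y := A)).mp (by omega)]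
    by_cases hyA : y = A
    · rw [hyA, SimpleGraph.dist_self] at h1
      exact absurd ((GD5 hn1 hm1 (x := x) (y := A)).mp (by omega)) hxA
    by_cases hxB : x = B
    · rw [hxB, SimpleGraph.dist_self] at h2
      rw [hxB, (GD5 hn1 hm1 (x := y) (y := B)).mp (by omega)]
    by_cases hyB : y = B
    · rw [hyB, SimpleGraph.dist_self] at h2
      exact absurd ((GD5 hn1 hm1 (x := x) (y := B)).mp (by omega)) hxB
    by_cases hxC : x = C
    · rw [hxC, SimpleGraph.dist_self] at h3
      rw [hxC, (GD5 hn1 hm1 (x := y) (y := C)).mp (by omega)]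
    by_cases hyC : y = C
    · rw [hyC, SimpleGraph.dist_self] at h3
      exact absurd ((GD5 hn1 hm1 (x := x) (y := C)).mp (by omega)) hxC
    rw [GD4 hn1 hm1 hxA, GD4 hn1 hm1 hyA, hTA] at h1
    rw [GD4 hn1 hm1 hxB, GD4 hn1 hm1 hyB, hTB] at h2
    rw [GD4 hn1 hm1 hxC, GD4 hn1 hm1 hyC, hTC] at h3
    have := ndA hn hm (toP_bounds x).1 (toP_bounds x).2 (toP_bounds y).1 (toP_bounds y).2
      (by omega) (by omega) (by omega)
    rw [toP_inj this]


variable {n m : ℕ}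

lemma bridgeA (hn1 : 1 ≤ n) (hm1 : 1 ≤ m) (U V : Fin n × Fin m)
    (w : (Fin n × Fin m) ⊕ (Fin n × Fin m))
    (h : nd (toP U) (toP (Sum.elim id id w)) = nd (toP V) (toP (Sum.elim id id w))) :
    (corona (pathGraph n □ pathGraph m)).dist (Sum.inl U) w =
      (corona (pathGraph n □ pathGraph m)).dist (Sum.inl V) w := by
  rcases w with p | p <;> simp only [Sum.elim_inl, Sum.elim_inr, id_eq] at h
  · rw [GD1 hn1 hm1, GD1 hn1 hm1, h]
  · rw [GD2 hn1 hm1, GD2 hn1 hm1, h]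

lemma bridgeB (hn1 : 1 ≤ n) (hm1 : 1 ≤ m) (U V : Fin n × Fin m)
    (w : (Fin n × Fin m) ⊕ (Fin n × Fin m)) (hne : V ≠ Sum.elim id id w)
    (h : nd (toP U) (toP (Sum.elim id id w)) = nd (toP V) (toP (Sum.elim id id w)) + 1) :
    (corona (pathGraph n □ pathGraph m)).dist (Sum.inl U) w =
      (corona (pathGraph n □ pathGraph m)).dist (Sum.inr V) w := by
  rcases w with p | p <;> simp only [Sum.elim_inl, Sum.elim_inr, id_eq] at h hne
  · rw [GD1 hn1 hm1, GD3 hn1 hm1, h]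
  · rw [GD2 hn1 hm1, GD4 hn1 hm1 hne, h]

set_option maxHeartbeats 1000000 in
lemma pair_nonresolving (hn : 3 ≤ n) (hm : 2 ≤ m)
    (s t : (Fin n × Fin m) ⊕ (Fin n × Fin m)) :
    ∃ u v : (Fin n × Fin m) ⊕ (Fin n × Fin m), u ≠ v ∧
      (corona (pathGraph n □ pathGraph m)).dist u s =
        (corona (pathGraph n □ pathGraph m)).dist v s ∧
      (corona (pathGraph n □ pathGraph m)).dist u t =
        (corona (pathGraph n □ pathGraph m)).dist v t := by
  have hn1 : 1 ≤ n := by omega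
  have hm1 : 1 ≤ m := by omega
  rcases key hn hm (toP (Sum.elim id id s)) (toP (Sum.elim id id t))
      (Sum.elim id id s).1.isLt (Sum.elim id id s).2.isLt
      (Sum.elim id id t).1.isLt (Sum.elim id id t).2.isLt with
    ⟨u', v', hu, hv, hne, e1, e2⟩ | ⟨u', v', hu, hv, hnp, hnq, e1, e2⟩
  · have hU : toP ((⟨u'.1, hu.1⟩, ⟨u'.2, hu.2⟩) : Fin n × Fin m) = u' := Prod.mk.eta
    have hV : toP ((⟨v'.1, hv.1⟩, ⟨v'.2, hv.2⟩) : Fin n × Fin m) = v' := Prod.mk.eta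
    refine ⟨Sum.inl (⟨u'.1, hu.1⟩, ⟨u'.2, hu.2⟩), Sum.inl (⟨v'.1, hv.1⟩, ⟨v'.2, hv.2⟩), ?_, ?_, ?_⟩
    · intro h
      rw [Sum.inl.injEq] at h
      exact hne (by rw [← hU, ← hV, h])
    · exact bridgeA hn1 hm1 _ _ s (by rw [hU, hV]; exact e1)
    · exact bridgeA hn1 hm1 _ _ t (by rw [hU, hV]; exact e2)
  · have hU : toP ((⟨u'.1, hu.1⟩, ⟨u'.2, hu.2⟩) : Fin n × Fin m) = u' := Prod.mk.eta
    have hV : toP ((⟨v'.1, hv.1⟩, ⟨v'.2, hv.2⟩) : Fin n × Fin m) = v' := Prod.mk.eta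
    refine ⟨Sum.inl (⟨u'.1, hu.1⟩, ⟨u'.2, hu.2⟩), Sum.inr (⟨v'.1, hv.1⟩, ⟨v'.2, hv.2⟩),
      by simp, ?_, ?_⟩
    · exact bridgeB hn1 hm1 _ _ s (fun h => hnp (by rw [← hV, h])) (by rw [hU, hV]; exact e1)
    · exact bridgeB hn1 hm1 _ _ t (fun h => hnq (by rw [← hV, h])) (by rw [hU, hV]; exact e2)

lemma lower_bound (hn : 3 ≤ n) (hm : 2 ≤ m)
    (S : Finset ((Fin n × Fin m) ⊕ (Fin n × Fin m)))
    (hres : IsResolving (corona (pathGraph n □ pathGraph m)) (↑S : Set _)) :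
    3 ≤ S.card := by
  by_contra h
  push_neg at h
  have hcover : ∃ s t : (Fin n × Fin m) ⊕ (Fin n × Fin m), (↑S : Set _) ⊆ {s, t} := by
    have : S.card = 0 ∨ S.card = 1 ∨ S.card = 2 := by omega
    rcases this with h0 | h1 | h2
    · refine ⟨Sum.inl (⟨0, by omega⟩, ⟨0, by omega⟩), Sum.inl (⟨0, by omega⟩, ⟨0, by omega⟩), ?_⟩
      rw [Finset.card_eq_zero.mp h0]
      simp
    · obtain ⟨a, ha⟩ := Finset.card_eq_one.mp h1
      exact ⟨a, a, by rw [ha]; simp⟩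
    · obtain ⟨a, b, _, hab⟩ := Finset.card_eq_two.mp h2
      exact ⟨a, b, by rw [hab]; simp⟩
  obtain ⟨s, t, hst⟩ := hcover
  obtain ⟨u, v, huv, h1, h2⟩ := pair_nonresolving hn hm s t
  apply huv
  apply hres
  intro x hx
  rcases hst hx with rfl | rfl
  · exact h1
  · exact h2

theorem stmt_0 (n m : ℕ) (hn : 3 ≤ n) (hm : 2 ≤ m) :
    metricDim (corona (pathGraph n □ pathGraph m)) = 3 := by
  obtain ⟨S3, hcard3, hres3⟩ := upper_bound hn hm
  have hmem : 3 ∈ {k | ∃ S : Finset ((Fin n × Fin m) ⊕ (Fin n × Fin m)),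
      S.card = k ∧ IsResolving (corona (pathGraph n □ pathGraph m)) (↑S : Set _)} :=
    ⟨S3, hcard3, hres3⟩
  unfold metricDim
  refine le_antisymm (Nat.sInf_le hmem) ?_
  obtain ⟨S, hcard, hres⟩ := Nat.sInf_mem (⟨3, hmem⟩ : Set.Nonempty _)
  rw [← hcard]
  exact lower_bound hn hm S hres
end

section
/- If G₁ is a graph obtained by adding a pendant edge to a nontrivial connected graph G, then dim(G) ≤ dim(G₁) ≤ dim(G) + 1. -/
open SimpleGraph

/-- The graph obtained from `G` by adding a pendant vertex adjacent only to `w`. -/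
def addPendant {V : Type*} (G : SimpleGraph V) (w : V) : SimpleGraph (V ⊕ Unit) :=
  SimpleGraph.fromRel (fun a b =>
    match a, b with
    | Sum.inl x, Sum.inl y => G.Adj x y
    | Sum.inl x, Sum.inr _ => x = w
    | _, _ => False)

section aux
variable {V : Type*} (G : SimpleGraph V) (w : V)

lemma ap_adj_inl_inl {x y : V} : (addPendant G w).Adj (Sum.inl x) (Sum.inl y) ↔ G.Adj x y := by
  constructor
  · rintro ⟨hne, h | h⟩
    · exact h
    · exact h.symm
  · intro h
    exact ⟨fun e => h.ne (Sum.inl.inj e), Or.inl h⟩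

lemma ap_adj_inl_inr {x : V} {t : Unit} :
    (addPendant G w).Adj (Sum.inl x) (Sum.inr t) ↔ x = w := by
  constructor
  · rintro ⟨hne, h | h⟩
    · exact h
    · exact h.elim
  · intro h; exact ⟨by simp, Or.inl h⟩

lemma ap_adj_inr_inr {t s : Unit} : ¬ (addPendant G w).Adj (Sum.inr t) (Sum.inr s) := by
  rintro ⟨hne, h | h⟩ <;> exact h

/-- inclusion homomorphism -/
def homInl : G →g addPendant G w where
  toFun := Sum.inl
  map_rel' := fun h => (ap_adj_inl_inl G w).mpr h

/-- projection -/
def proj : V ⊕ Unit → V := Sum.elim id (fun _ => w)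

lemma proj_walk : ∀ {a b : V ⊕ Unit} (W : (addPendant G w).Walk a b),
    ∃ Q : G.Walk (proj w a) (proj w b), Q.length ≤ W.length := by
  intro a b W
  induction W with
  | nil => exact ⟨SimpleGraph.Walk.nil, le_refl _⟩
  | @cons a b c h W ih =>
      obtain ⟨Q, hQ⟩ := ih
      have : proj w a = proj w b ∨ G.Adj (proj w a) (proj w b) := by
        rcases a with x | t <;> rcases b with y | s
        · exact Or.inr ((ap_adj_inl_inl G w).mp h)
        · exact Or.inl (by simpa [proj] using (ap_adj_inl_inr G w).mp h)
        · exact Or.inl (by simpa [proj] using ((ap_adj_inl_inr G w).mp h.symm).symm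
)
        · exact absurd h (ap_adj_inr_inr G w)
      rcases this with he | ha
      · exact ⟨Q.copy he.symm rfl, by simpa using hQ.trans (Nat.le_succ _)⟩
      · exact ⟨SimpleGraph.Walk.cons ha Q, by simpa using Nat.succ_le_succ hQ⟩

lemma ap_dist_inl (hG : G.Connected) (u v : V) :
    (addPendant G w).dist (Sum.inl u) (Sum.inl v) = G.dist u v := by
  obtain ⟨P, hP⟩ := hG.exists_walk_length_eq_dist u v
  apply le_antisymm
  · calc (addPendant G w).dist (Sum.inl u) (Sum.inl v) ≤ (P.map (homInl G w)).length :=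
          SimpleGraph.dist_le _
      _ = G.dist u v := by rw [SimpleGraph.Walk.length_map]; exact hP
  · have hr : (addPendant G w).Reachable (Sum.inl u) (Sum.inl v) := ⟨P.map (homInl G w)⟩
    obtain ⟨W, hW⟩ := hr.exists_walk_length_eq_dist
    obtain ⟨Q, hQ⟩ := proj_walk G w W
    calc G.dist u v ≤ Q.length := SimpleGraph.dist_le _
      _ ≤ W.length := hQ
      _ = _ := hW

lemma ap_dist_inr (hG : G.Connected) (u : V) :
    (addPendant G w).dist (Sum.inl u) (Sum.inr ()) = G.dist u w + 1 := by
  obtain ⟨P, hP⟩ := hG.exists_walk_length_eq_dist u w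
  have hadj : (addPendant G w).Adj (Sum.inl w) (Sum.inr ()) := (ap_adj_inl_inr G w).mpr rfl
  apply le_antisymm
  · calc (addPendant G w).dist (Sum.inl u) (Sum.inr ())
        ≤ ((P.map (homInl G w)).concat hadj).length := SimpleGraph.dist_le _
      _ = G.dist u w + 1 := by
          erw [SimpleGraph.Walk.length_concat, SimpleGraph.Walk.length_map, hP]
  · have hr : (addPendant G w).Reachable (Sum.inr ()) (Sum.inl u) :=
      (hadj.symm.reachable).trans ⟨(P.map (homInl G w)).reverse⟩
    obtain ⟨W, hW⟩ := hr.exists_walk_length_eq_dist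
    rw [show (addPendant G w).dist (Sum.inl u) (Sum.inr ()) = W.length from by
      rw [hW, SimpleGraph.dist_comm]]
    cases W with
    | @cons _ b _ h W' =>
        have hb : b = Sum.inl w := by
          rcases b with y | s
          · exact congrArg Sum.inl ((ap_adj_inl_inr G w).mp h.symm)
          · exact absurd h (ap_adj_inr_inr G w)
        subst hb
        obtain ⟨Q, hQ⟩ := proj_walk G w W'
        have : G.dist w u ≤ W'.length := le_trans (SimpleGraph.dist_le Q) hQ
        rw [SimpleGraph.dist_comm]
        simpa [SimpleGraph.Walk.length_cons] using Nat.succ_le_succ this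

lemma ap_connected (hG : G.Connected) : (addPendant G w).Connected := by
  rw [SimpleGraph.connected_iff]
  refine ⟨?_, ⟨Sum.inl w⟩⟩
  have hadj : (addPendant G w).Adj (Sum.inl w) (Sum.inr ()) := (ap_adj_inl_inr G w).mpr rfl
  have key : ∀ u : V, (addPendant G w).Reachable (Sum.inl u) (Sum.inr ()) := fun u =>
    SimpleGraph.Reachable.trans
      (⟨((hG.preconnected u w).some).map (homInl G w)⟩ :
        (addPendant G w).Reachable (Sum.inl u) (Sum.inl w))
      hadj.reachable
  rintro (u | t) (v | s)
  · exact ⟨((hG.preconnected u v).some).map (homInl G w)⟩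
  · cases s; exact key u
  · cases t; exact (key v).symm
  · cases t; cases s; rfl

lemma univ_resolving [Fintype V] (hG : G.Connected) : IsResolving G (↑(Finset.univ : Finset V) : Set V) := by
  intro u v h
  have := h v (by simp)
  rw [SimpleGraph.dist_self] at this
  exact (hG.dist_eq_zero_iff.mp this)

end aux

theorem stmt_8 {V : Type*} [Fintype V] [Nontrivial V] (G : SimpleGraph V)
    (hG : G.Connected) (w : V) :
    metricDim G ≤ metricDim (addPendant G w) ∧
      metricDim (addPendant G w) ≤ metricDim G + 1 := by
  have hG1 : (addPendant G w).Connected := ap_connected G w hG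
  haveI : Nonempty V := ⟨w⟩
  -- nonempty of the defining sets
  have hne : {k | ∃ S : Finset V, S.card = k ∧ IsResolving G (↑S : Set V)}.Nonempty :=
    ⟨_, Finset.univ, rfl, univ_resolving G hG⟩
  have hne1 : {k | ∃ S : Finset (V ⊕ Unit), S.card = k ∧
      IsResolving (addPendant G w) (↑S : Set (V ⊕ Unit))}.Nonempty :=
    ⟨_, Finset.univ, rfl, univ_resolving _ hG1⟩
  obtain ⟨S, hScard, hSres⟩ := Nat.sInf_mem hne
  obtain ⟨T, hTcard, hTres⟩ := Nat.sInf_mem hne1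
  constructor
  · -- project T to V, adding w
    classical
    set S' : Finset V := T.image (proj w) with hS'
    have hres : IsResolving G (↑S' : Set V) := by
      intro u v h
      have h2 : ∀ s ∈ T, (addPendant G w).dist (Sum.inl u) s
          = (addPendant G w).dist (Sum.inl v) s := by
        intro s hs
        rcases s with x | t
        · rw [ap_dist_inl G w hG, ap_dist_inl G w hG]
          exact h x (Finset.mem_coe.mpr (Finset.mem_image.mpr ⟨Sum.inl x, hs, rfl⟩))
        · cases t
          rw [ap_dist_inr G w hG, ap_dist_inr G w hG]
          have := h w (Finset.mem_coe.mpr (Finset.mem_image.mpr ⟨Sum.inr (), hs, rfl⟩))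
          omega
      exact Sum.inl.inj (hTres _ _ h2)
    calc metricDim G ≤ S'.card := Nat.sInf_le ⟨S', rfl, hres⟩
      _ ≤ T.card := Finset.card_image_le
      _ = metricDim (addPendant G w) := hTcard
  · classical
    set T' : Finset (V ⊕ Unit) := S.image Sum.inl ∪ {Sum.inr ()} with hT'
    have hres : IsResolving (addPendant G w) (↑T' : Set (V ⊕ Unit)) := by
      have hmemr : Sum.inr () ∈ T' := by simp [hT']
      intro u v h
      have hr := h (Sum.inr ()) (by exact_mod_cast hmemr)
      rcases u with x | t <;> rcases v with y | s
      · refine congrArg Sum.inl (hSres x y fun s hs => ?_)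
        have := h (Sum.inl s) (Finset.mem_coe.mpr
          (Finset.mem_union_left _ (Finset.mem_image.mpr ⟨s, hs, rfl⟩)))
        rwa [ap_dist_inl G w hG, ap_dist_inl G w hG] at this
      · exfalso
        cases s
        rw [ap_dist_inr G w hG, SimpleGraph.dist_self] at hr
        omega
      · exfalso
        cases t
        rw [ap_dist_inr G w hG, SimpleGraph.dist_self] at hr
        omega
      · cases t; cases s; rfl
    calc metricDim (addPendant G w) ≤ T'.card := Nat.sInf_le ⟨T', rfl, hres⟩
      _ ≤ (S.image Sum.inl).card + ({Sum.inr ()} : Finset (V ⊕ Unit)).card :=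
          Finset.card_union_le _ _
      _ ≤ S.card + 1 := by
          have := Finset.card_image_le (s := S) (f := (Sum.inl : V → V ⊕ Unit))
          simp only [Finset.card_singleton]
          omega
      _ = metricDim G + 1 := by rw [hScard]; rfl
end
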